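/- arXiv:1005.1744 — 2 statements merged into one kernel-verified Lean document; each statement's English description precedes it below -/
import Mathlib

section
/- Let P be an n×l binary matrix with code C(P) of rank r. For every real θ with e^{2iθ} ≠ 1: e^{iθ(r−n)} · i^r · (sin θ)^r · T_{M(P)}( (e^{iθ}+e^{−iθ})/(e^{iθ}−e^{−iθ}), e^{2iθ} ) = 2^{−r} · Σ_{c∈C(P)} exp( iθ·(n − 2|c|) ), i.e. the normalised weight-enumerator value α_{(P,θ)} equals the average over all codewords c of C(P) of exp(iθ(n−2|c|)). -/
open Matrix BigOperators Finset

noncomputable section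

set_option maxHeartbeats 1000000
set_option synthInstance.maxHeartbeats 1000000

/-- The binary code generated by the columns of `P`: all vectors `P·s`. -/
def code {m : Type*} [Fintype m] {l : ℕ} (P : Matrix m (Fin l) (ZMod 2)) :
    Finset (m → ZMod 2) :=
  Finset.image P.mulVec Finset.univ

/-- Rank function of the binary matroid of `P`: the F₂-rank of the submatrix of
rows indexed by `X`. -/
def rho {m : Type*} [Fintype m] {l : ℕ} (P : Matrix m (Fin l) (ZMod 2)) (X : Finset m) : ℕ :=
  (P.submatrix (fun i : {i // i ∈ X} => (i : m)) id).rank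

/-- Tutte polynomial of the binary matroid of `P`. -/
def tutte {m : Type*} [Fintype m] {l : ℕ} (P : Matrix m (Fin l) (ZMod 2)) (x y : ℂ) : ℂ :=
  ∑ X ∈ (Finset.univ : Finset m).powerset,
    (x - 1) ^ (rho P Finset.univ - rho P X) * (y - 1) ^ (X.card - rho P X)

/-- Normalised weight enumerator. -/
def alpha {m : Type*} [Fintype m] {l : ℕ} (P : Matrix m (Fin l) (ZMod 2)) (θ : ℝ) : ℂ :=
  (2 : ℂ) ^ (-(P.rank : ℤ)) *
    ∑ c ∈ code P, Complex.exp (Complex.I * θ * ((Fintype.card m : ℂ) - 2 * (hammingNorm c : ℂ)))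

/-- The IQP probability distribution of an X-program `(P, θ)`. -/
def iqpProb {n l : ℕ} (P : Matrix (Fin n) (Fin l) (ZMod 2)) (θ : ℝ) (x : Fin l → ZMod 2) : ℝ :=
  ‖((2 : ℂ) ^ (-(l : ℤ)) *
    ∑ a : Fin l → ZMod 2, (-1 : ℂ) ^ (x ⬝ᵥ a).val *
      Complex.exp (Complex.I * θ * ∑ j, (-1 : ℂ) ^ ((P j) ⬝ᵥ a).val))‖ ^ 2

/-- Affinification: the submatrix of rows `P_j` with `P_j ⬝ s = 1`. -/
def affin {n l : ℕ} (P : Matrix (Fin n) (Fin l) (ZMod 2)) (s : Fin l → ZMod 2) :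
    Matrix {j : Fin n // (P j) ⬝ᵥ s = 1} (Fin l) (ZMod 2) :=
  Matrix.of fun j k => P j.1 k


section aux
set_option linter.unusedSectionVars false

variable {m : Type*} [Fintype m] [DecidableEq m] {l : ℕ} (P : Matrix m (Fin l) (ZMod 2))

lemma mvl_sub (X : Finset m) :
    (P.submatrix (fun i : {i // i ∈ X} => (i : m)) id).mulVecLin
      = (LinearMap.funLeft (ZMod 2) (ZMod 2) (fun i : {i // i ∈ X} => (i : m))).comp
          P.mulVecLin := by
  have := Matrix.mulVecLin_submatrix (fun i : {i // i ∈ X} => (i : m)) (Equiv.refl (Fin l)) P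
  simp at this
  exact this.trans rfl

lemma rho_le_rank (X : Finset m) : rho P X ≤ P.rank := by
  rw [rho, Matrix.rank, mvl_sub, LinearMap.range_comp]
  exact (Submodule.finrank_map_le _ _).trans le_rfl

lemma rho_le_card (X : Finset m) : rho P X ≤ X.card := by
  simpa [rho, Fintype.card_coe] using
    (P.submatrix (fun i : {i // i ∈ X} => (i : m)) id).rank_le_card_height

lemma rho_univ : rho P (Finset.univ : Finset m) = P.rank := by
  rw [rho, Matrix.rank, Matrix.rank, mvl_sub, LinearMap.range_comp]
  have : LinearMap.funLeft (ZMod 2) (ZMod 2) (fun i : {i // i ∈ (univ : Finset m)} => (i : m))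
      = (LinearEquiv.funCongrLeft (ZMod 2) (ZMod 2)
          (Equiv.subtypeUnivEquiv (by simp))).toLinearMap := rfl
  rw [this]
  exact LinearEquiv.finrank_map_eq _ _

lemma count_lemma (A : Finset m) :
    ((code P).filter (fun c => ∀ j ∈ A, c j = 0)).card = 2 ^ (P.rank - rho P A) := by
  classical
  set f := P.mulVecLin with hf
  set g := (P.submatrix (fun i : {i // i ∈ A} => (i : m)) id).mulVecLin with hg
  set N := LinearMap.ker g with hN
  set W := N.map f with hW
  have h1 : g = (LinearMap.funLeft (ZMod 2) (ZMod 2) (fun i : {i // i ∈ A} => (i : m))).comp f :=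
    mvl_sub P A
  have hker : LinearMap.ker f ≤ N := by
    rw [hN, h1]; exact LinearMap.ker_le_ker_comp f _
  have hset : ((code P).filter (fun c => ∀ j ∈ A, c j = 0) : Set (m → ZMod 2)) = (W : Set _) := by
    ext c
    simp only [Finset.coe_filter, Set.mem_setOf_eq, code, Finset.mem_image, Finset.mem_univ,
      true_and, SetLike.mem_coe, hW, Submodule.mem_map, hN, LinearMap.mem_ker]
    constructor
    · rintro ⟨⟨s, rfl⟩, h⟩
      refine ⟨s, ?_, rfl⟩
      · funext j
        have := h j.1 j.2
        rw [h1]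
        simpa [LinearMap.funLeft, f] using this
    · rintro ⟨s, hs, rfl⟩
      refine ⟨⟨s, rfl⟩, ?_⟩
      intro j hj
      have := congrFun hs ⟨j, hj⟩
      rw [h1] at this
      simpa [LinearMap.funLeft, f] using this
  have hcard : ((code P).filter (fun c => ∀ j ∈ A, c j = 0)).card = Nat.card W := by
    rw [← Set.ncard_coe_finset, hset]
    exact (Nat.card_coe_set_eq _).symm
  have hWrank : Module.finrank (ZMod 2) W = P.rank - rho P A := by
    have hR := LinearMap.finrank_range_add_finrank_ker (f.domRestrict N)
    rw [LinearMap.range_domRestrict, LinearMap.ker_domRestrict] at hR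
    have e1 : Module.finrank (ZMod 2) ((LinearMap.ker f).comap N.subtype)
        = Module.finrank (ZMod 2) (LinearMap.ker f) :=
      (Submodule.comapSubtypeEquivOfLe hker).finrank_eq
    rw [e1] at hR
    have hRg := LinearMap.finrank_range_add_finrank_ker g
    have hRf := LinearMap.finrank_range_add_finrank_ker f
    have hdim : Module.finrank (ZMod 2) (Fin l → ZMod 2) = l := by simp
    rw [hdim] at hRg hRf
    have hrg : Module.finrank (ZMod 2) (LinearMap.range g) = rho P A := rfl
    have hrf : Module.finrank (ZMod 2) (LinearMap.range f) = P.rank := rfl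
    rw [hrg] at hRg
    rw [hrf] at hRf
    have hle : rho P A ≤ P.rank := rho_le_rank P A
    have h2 : Module.finrank (ZMod 2) ↥W + Module.finrank (ZMod 2) ↥(LinearMap.ker f)
        = Module.finrank (ZMod 2) ↥N := hR
    have h3 : rho P A + Module.finrank (ZMod 2) ↥N = l := hRg
    generalize Module.finrank (ZMod 2) ↥W = wv at h2 ⊢
    generalize Module.finrank (ZMod 2) ↥(LinearMap.ker f) = kv at h2 hRf
    generalize Module.finrank (ZMod 2) ↥N = nv at h2 h3
    clear hR e1 hRg hdim hrg hrf hset hcard h1 hker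
    omega
  haveI : Fintype ↥W := Fintype.ofFinite ↥W
  rw [hcard, Nat.card_eq_fintype_card]
  rw [Module.card_eq_pow_finrank (K := ZMod 2) (V := W), ZMod.card, hWrank]

end aux

lemma keyterm (u : ℂ) (hu : u ≠ 0) (h2 : u^2 - 1 ≠ 0) {r ρ k nn : ℕ}
    (h1 : ρ ≤ r) (hk : ρ ≤ k) (hn : k ≤ nn) :
    u^r * (u⁻¹)^nn * ((u-u⁻¹)/2)^r * ((2*u⁻¹/(u-u⁻¹))^(r-ρ) * (u*(u-u⁻¹))^(k-ρ))
    = ((2:ℂ)^r)⁻¹ * ((2:ℂ)^(r-ρ) * ((u-u⁻¹)^k * (u⁻¹)^(nn-k))) := by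
  obtain ⟨a, rfl⟩ := Nat.exists_eq_add_of_le h1
  obtain ⟨b, rfl⟩ := Nat.exists_eq_add_of_le hk
  obtain ⟨c, rfl⟩ := Nat.exists_eq_add_of_le hn
  rw [Nat.add_sub_cancel_left, Nat.add_sub_cancel_left, Nat.add_sub_cancel_left]
  have hrw : u - u⁻¹ = (u^2 - 1)/u := by field_simp
  have hw : u - u⁻¹ ≠ 0 := by rw [hrw]; exact div_ne_zero h2 hu
  generalize u - u⁻¹ = w at hw ⊢
  simp only [div_pow, mul_pow, pow_add, inv_pow]
  field_simp



/-- for `e^{2iθ} ≠ 1`,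
`e^{iθ(r−n)} · i^r · (sin θ)^r · T_{M(P)}((e^{iθ}+e^{−iθ})/(e^{iθ}−e^{−iθ}), e^{2iθ})
  = 2^{−r} · Σ_{c∈C(P)} exp(iθ(n−2|c|)) = α_{(P,θ)}`. -/
theorem alpha_eq_tutte {n l : ℕ} (P : Matrix (Fin n) (Fin l) (ZMod 2)) (θ : ℝ)
    (hθ : Complex.exp (2 * Complex.I * θ) ≠ 1) :
    Complex.exp (Complex.I * θ * ((P.rank : ℂ) - (n : ℂ))) * Complex.I ^ P.rank *
        ((Real.sin θ : ℂ)) ^ P.rank *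
        tutte P
          ((Complex.exp (Complex.I * θ) + Complex.exp (-(Complex.I * θ))) /
            (Complex.exp (Complex.I * θ) - Complex.exp (-(Complex.I * θ))))
          (Complex.exp (2 * Complex.I * θ)) =
      (2 : ℂ) ^ (-(P.rank : ℤ)) *
        ∑ c ∈ code P, Complex.exp (Complex.I * θ * ((n : ℂ) - 2 * (hammingNorm c : ℂ))) := by
  classical
  set u := Complex.exp (Complex.I * θ) with hu_def
  have hu : u ≠ 0 := Complex.exp_ne_zero _
  have hv : Complex.exp (-(Complex.I * θ)) = u⁻¹ := by
    rw [Complex.exp_neg]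
  have hy : Complex.exp (2 * Complex.I * θ) = u ^ 2 := by
    rw [show (2 : ℂ) * Complex.I * θ = (2 : ℕ) * (Complex.I * θ) by push_cast; ring,
      Complex.exp_nat_mul]
  have h2 : u ^ 2 - 1 ≠ 0 := sub_ne_zero.mpr (by rw [← hy]; exact hθ)
  have hw : u - u⁻¹ ≠ 0 := by
    have hrw : u - u⁻¹ = (u^2 - 1)/u := by field_simp
    rw [hrw]
    exact div_ne_zero h2 hu
  -- exp of natural difference
  have expab : ∀ a b : ℕ, Complex.exp (Complex.I * θ * ((a:ℂ) - (b:ℂ))) = u^a * (u⁻¹)^b := by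
    intro a b
    rw [mul_sub, Complex.exp_sub]
    rw [show Complex.I * θ * (a:ℂ) = (a:ℕ) * (Complex.I * θ) by push_cast; ring,
      show Complex.I * θ * (b:ℂ) = (b:ℕ) * (Complex.I * θ) by push_cast; ring,
      Complex.exp_nat_mul, Complex.exp_nat_mul, div_eq_mul_inv, inv_pow]
  -- binomial expansion
  have hbin : ∀ Z : Finset (Fin n),
      ∑ A ∈ Z.powerset, (u - u⁻¹)^A.card * (u⁻¹)^(n - A.card)
        = u ^ Z.card * (u⁻¹) ^ (n - Z.card) := by
    intro Z
    have hZn : Z.card ≤ n := by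
      simpa using Finset.card_le_univ Z
    have h1 : ∀ A ∈ Z.powerset, (u - u⁻¹)^A.card * (u⁻¹)^(n - A.card)
        = ((u - u⁻¹)^A.card * (u⁻¹)^(Z.card - A.card)) * (u⁻¹)^(n - Z.card) := by
      intro A hA
      have hAZ : A.card ≤ Z.card := Finset.card_le_card (Finset.mem_powerset.mp hA)
      rw [mul_assoc, ← pow_add]
      congr 2
      omega
    rw [Finset.sum_congr rfl h1, ← Finset.sum_mul]
    congr 1
    have hpa := Finset.prod_add (fun _ : Fin n => u - u⁻¹) (fun _ : Fin n => u⁻¹) Z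
    simp only [Finset.prod_const, sub_add_cancel] at hpa
    rw [hpa]
    refine Finset.sum_congr rfl fun A hA => ?_
    rw [Finset.card_sdiff_of_subset (Finset.mem_powerset.mp hA)]
  -- rewriting each codeword term
  have hcode : ∀ c ∈ code P,
      Complex.exp (Complex.I * θ * ((n : ℂ) - 2 * (hammingNorm c : ℂ)))
        = ∑ A ∈ ((univ : Finset (Fin n)).filter (fun j => c j = 0)).powerset,
            (u - u⁻¹)^A.card * (u⁻¹)^(n - A.card) := by
    intro c _
    have hwn : hammingNorm c ≤ n := by
      simpa using (hammingNorm_le_card_fintype (x := c))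
    have hZ : ((univ : Finset (Fin n)).filter (fun j => c j = 0)).card = n - hammingNorm c := by
      have := Finset.card_filter_add_card_filter_not
        (s := (univ : Finset (Fin n))) (p := fun j => c j = 0)
      simp only [Finset.card_univ, Fintype.card_fin] at this
      have hnorm : hammingNorm c
          = ((univ : Finset (Fin n)).filter (fun j => ¬ c j = 0)).card := by
        simp [hammingNorm]
      omega
    rw [hbin, hZ, show n - (n - hammingNorm c) = hammingNorm c from by omega,
      show (n:ℂ) - 2 * (hammingNorm c : ℂ)
        = ((n - hammingNorm c : ℕ):ℂ) - ((hammingNorm c : ℕ):ℂ) from by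
          push_cast [Nat.cast_sub hwn]; ring]
    exact expab _ _
  -- swap sums
  have hswap : ∑ c ∈ code P, Complex.exp (Complex.I * θ * ((n : ℂ) - 2 * (hammingNorm c : ℂ)))
      = ∑ A ∈ (univ : Finset (Fin n)).powerset,
          ((2:ℂ) ^ (P.rank - rho P A)) * ((u - u⁻¹)^A.card * (u⁻¹)^(n - A.card)) := by
    rw [Finset.sum_congr rfl hcode]
    have hps : ∀ c : Fin n → ZMod 2,
        ((univ : Finset (Fin n)).filter (fun j => c j = 0)).powerset
          = (univ : Finset (Fin n)).powerset.filter (fun A => ∀ j ∈ A, c j = 0) := by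
      intro c
      ext A
      simp [Finset.mem_powerset, Finset.subset_iff]
    calc ∑ c ∈ code P, ∑ A ∈ ((univ : Finset (Fin n)).filter (fun j => c j = 0)).powerset,
            (u - u⁻¹)^A.card * (u⁻¹)^(n - A.card)
        = ∑ c ∈ code P, ∑ A ∈ (univ : Finset (Fin n)).powerset,
            (if ∀ j ∈ A, c j = 0 then (u - u⁻¹)^A.card * (u⁻¹)^(n - A.card) else 0) := by
          refine Finset.sum_congr rfl fun c _ => ?_
          rw [hps c, Finset.sum_filter]
      _ = ∑ A ∈ (univ : Finset (Fin n)).powerset, ∑ c ∈ code P,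
            (if ∀ j ∈ A, c j = 0 then (u - u⁻¹)^A.card * (u⁻¹)^(n - A.card) else 0) :=
          Finset.sum_comm
      _ = ∑ A ∈ (univ : Finset (Fin n)).powerset,
            ((2:ℂ) ^ (P.rank - rho P A)) * ((u - u⁻¹)^A.card * (u⁻¹)^(n - A.card)) := by
          refine Finset.sum_congr rfl fun A _ => ?_
          rw [← Finset.sum_filter, Finset.sum_const]
          simp only [nsmul_eq_mul]
          congr 1
          norm_cast
          convert count_lemma P A using 2
          ext c
          simp [Finset.mem_filter]
  rw [hswap, tutte, rho_univ, Finset.mul_sum, Finset.mul_sum]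
  refine Finset.sum_congr rfl fun X hX => ?_
  have hρr : rho P X ≤ P.rank := rho_le_rank P X
  have hρX : rho P X ≤ X.card := rho_le_card P X
  have hXn : X.card ≤ n := by simpa using Finset.card_le_univ X
  have hexp : Complex.exp (Complex.I * θ * ((P.rank : ℂ) - (n : ℂ)))
      = u ^ P.rank * (u⁻¹) ^ n := expab P.rank n
  have hIs : Complex.I * (Real.sin θ : ℂ) = (u - u⁻¹) / 2 := by
    rw [hu_def, Complex.ofReal_sin, Complex.sin,
      show (-(θ:ℂ)) * Complex.I = -(Complex.I * (θ:ℂ)) by ring,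
      Complex.exp_neg, mul_comm (θ:ℂ) Complex.I]
    linear_combination
      (((Complex.exp (Complex.I * (θ:ℂ)))⁻¹ - Complex.exp (Complex.I * (θ:ℂ))) / 2) *
        Complex.I_sq
  have hIsr : Complex.I ^ P.rank * ((Real.sin θ : ℂ)) ^ P.rank = ((u - u⁻¹) / 2) ^ P.rank := by
    rw [← mul_pow, hIs]
  have hx1 : (u + u⁻¹) / (u - u⁻¹) - 1 = 2 * u⁻¹ / (u - u⁻¹) := by
    rw [div_sub_one hw]
    congr 1
    ring
  have hy1 : Complex.exp (2 * Complex.I * θ) - 1 = u * (u - u⁻¹) := by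
    rw [hy]
    field_simp
  rw [hv, hx1, hy1, _root_.zpow_neg, zpow_natCast,
    mul_assoc (Complex.exp (Complex.I * θ * ((P.rank : ℂ) - (n : ℂ)))) (Complex.I ^ P.rank)
      ((Real.sin θ : ℂ) ^ P.rank), hIsr, hexp]
  exact keyterm u hu h2 hρr hρX hXn
end
end

section
/- Let P be an n×l binary matrix with code C(P) of rank r, let x ∈ F₂ˡ be a nonzero vector lying in the row space of P, fix an index j with x_j = 1, and let Q := P⊤x be the projection of P along x; assume that C(Q) ≠ C(P) (equivalently, the rank of C(Q) is r−1). For an integer t ≥ 1, let Q(t) denote the (n+t)×l binary matrix obtained from P by appending t rows each equal to x. Then for all complex numbers x̂, ŷ: (1−ŷ) · T_{M(Q(t))}(x̂,ŷ) = (1−ŷᵗ) · T_{M(Q)}(x̂,ŷ) + (1−ŷ) · T_{M(P)}(x̂,ŷ). -/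
open Matrix BigOperators Finset

noncomputable section

namespace TutteAux

open Submodule

variable {l : ℕ}

/-- finrank of the span of a set of vectors. -/
def sr {l : ℕ} (S : Set (Fin l → ZMod 2)) : ℕ :=
  Module.finrank (ZMod 2) (Submodule.span (ZMod 2) S)

lemma sr_mono {S T : Set (Fin l → ZMod 2)} (h : S ⊆ T) : sr S ≤ sr T :=
  Submodule.finrank_mono (Submodule.span_mono h)

lemma sr_congr {S T : Set (Fin l → ZMod 2)}
    (h : Submodule.span (ZMod 2) S = Submodule.span (ZMod 2) T) : sr S = sr T := by
  unfold sr; rw [h]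

lemma sr_le_card (s : Finset (Fin l → ZMod 2)) : sr (↑s : Set (Fin l → ZMod 2)) ≤ s.card :=
  finrank_span_finset_le_card s

lemma rho_eq_sr {m : Type*} [Fintype m] (P : Matrix m (Fin l) (ZMod 2)) (X : Finset m) :
    rho P X = sr ((fun i => P i) '' ↑X) := by
  unfold rho sr
  rw [Matrix.rank_eq_finrank_span_row]
  have hset : Set.range (P.submatrix (fun i : {i // i ∈ X} => (i : m)) id).row
      = (fun i => P i) '' ↑X := by
    ext v
    constructor
    · rintro ⟨i, rfl⟩; exact ⟨i, i.2, rfl⟩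
    · rintro ⟨i, hi, rfl⟩; exact ⟨⟨i, hi⟩, rfl⟩
  rw [hset]

lemma sr_insert_of_not_mem {x : Fin l → ZMod 2} {S : Set (Fin l → ZMod 2)} (hx : x ≠ 0)
    (h : x ∉ Submodule.span (ZMod 2) S) : sr (insert x S) = sr S + 1 := by
  unfold sr
  rw [Submodule.span_insert]
  have hinf : (ZMod 2 ∙ x) ⊓ Submodule.span (ZMod 2) S = ⊥ := by
    rw [Submodule.eq_bot_iff]
    rintro y ⟨hy1, hy2⟩
    rcases Submodule.mem_span_singleton.mp hy1 with ⟨c, rfl⟩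
    by_cases hc : c = 0
    · simp [hc]
    · exact absurd (by simpa [smul_smul, inv_mul_cancel₀ hc] using
        Submodule.smul_mem _ c⁻¹ hy2) h
  have := Submodule.finrank_sup_add_finrank_inf_eq (ZMod 2 ∙ x) (Submodule.span (ZMod 2) S)
  rw [hinf, finrank_bot, add_zero, finrank_span_singleton hx] at this
  omega

lemma sr_insert_le (x : Fin l → ZMod 2) (S : Set (Fin l → ZMod 2)) :
    sr (insert x S) ≤ sr S + 1 := by
  by_cases hm : x ∈ Submodule.span (ZMod 2) S
  · have : sr (insert x S) = sr S := sr_congr (Submodule.span_insert_eq_span hm)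
    omega
  · by_cases hx : x = 0
    · subst hx
      have : sr (insert (0 : Fin l → ZMod 2) S) = sr S :=
        sr_congr (Submodule.span_insert_eq_span (Submodule.zero_mem _))
      omega
    · rw [sr_insert_of_not_mem hx hm]

lemma sum_pow_card {γ : Type*} [DecidableEq γ] (s : Finset γ) (z : ℂ) :
    ∑ B ∈ s.powerset, z ^ B.card = (z + 1) ^ s.card := by
  induction s using Finset.induction_on with
  | empty => simp
  | @insert a s ha ih =>
    rw [Finset.sum_powerset_insert ha, Finset.card_insert_of_notMem ha, pow_succ, ← ih]
    have : ∀ B ∈ s.powerset, z ^ (insert a B).card = z * z ^ B.card := by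
      intro B hB
      rw [Finset.card_insert_of_notMem (fun hc => ha (Finset.mem_powerset.mp hB hc)),
        pow_succ]
      ring
    rw [Finset.sum_congr rfl this, ← Finset.mul_sum]
    ring

end TutteAux

open TutteAux

theorem tutte_append_rows {n l : ℕ} (P : Matrix (Fin n) (Fin l) (ZMod 2))
    (x : Fin l → ZMod 2) (hx : x ≠ 0)
    (hrow : ∃ w : Fin n → ZMod 2, Matrix.vecMul w P = x)
    (j : Fin l) (hj : x j = 1)
    (hQ : code (Matrix.of fun a b => P a b + P a j * x b) ≠ code P)
    (t : ℕ) (ht : 1 ≤ t) (xh yh : ℂ) :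
    (1 - yh) *
        tutte (Matrix.of (Sum.elim (fun a : Fin n => P a) (fun _ : Fin t => x))) xh yh =
      (1 - yh ^ t) * tutte (Matrix.of fun a b => P a b + P a j * x b) xh yh +
        (1 - yh) * tutte P xh yh := by
  classical
  obtain ⟨w, hw⟩ := hrow
  set Q : Matrix (Fin n) (Fin l) (ZMod 2) := Matrix.of fun a b => P a b + P a j * x b
    with hQdef
  set R : Matrix (Fin n ⊕ Fin t) (Fin l) (ZMod 2) :=
    Matrix.of (Sum.elim (fun a : Fin n => P a) (fun _ : Fin t => x)) with hRdef
  have haddself : ∀ c : ZMod 2, c + c = 0 := by decide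
  -- x lies in the row span of P
  have hxspan : x ∈ Submodule.span (ZMod 2) (Set.range (fun a : Fin n => P a)) := by
    rw [Submodule.mem_span_range_iff_exists_fun]
    refine ⟨w, ?_⟩
    funext b
    rw [← hw]
    simp [Matrix.vecMul, dotProduct, Finset.sum_apply, smul_eq_mul]
  -- rows of Q
  have hQa : ∀ a : Fin n, Q a = P a + P a j • x := by
    intro a; funext b
    simp [hQdef, Pi.add_apply, Pi.smul_apply, smul_eq_mul]
  -- span of Q-rows together with x is span of P-rows together with x
  have hspanQP : ∀ X : Finset (Fin n),
      Submodule.span (ZMod 2) (insert x ((fun a => Q a) '' ↑X))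
        = Submodule.span (ZMod 2) (insert x ((fun a => P a) '' ↑X)) := by
    intro X
    have hPa : ∀ a : Fin n, P a = Q a + P a j • x := by
      intro a
      rw [hQa a, add_assoc, ← add_smul, haddself (P a j), zero_smul, add_zero]
    apply le_antisymm <;> rw [Submodule.span_le] <;> intro v hv <;>
      rcases Set.mem_insert_iff.mp hv with rfl | ⟨a, ha, rfl⟩
    · exact Submodule.subset_span (Set.mem_insert _ _)
    · show Q a ∈ _
      rw [hQa a]
      exact add_mem (Submodule.subset_span (Set.mem_insert_of_mem _ ⟨a, ha, rfl⟩))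
        (Submodule.smul_mem _ _ (Submodule.subset_span (Set.mem_insert _ _)))
    · exact Submodule.subset_span (Set.mem_insert _ _)
    · show P a ∈ _
      rw [hPa a]
      exact add_mem (Submodule.subset_span (Set.mem_insert_of_mem _ ⟨a, ha, rfl⟩))
        (Submodule.smul_mem _ _ (Submodule.subset_span (Set.mem_insert _ _)))
  -- x is not in the span of Q-rows
  have hxnotQ : ∀ X : Finset (Fin n),
      x ∉ Submodule.span (ZMod 2) ((fun a => Q a) '' ↑X) := by
    intro X hmem
    have hker : Submodule.span (ZMod 2) ((fun a => Q a) '' ↑X)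
        ≤ LinearMap.ker (LinearMap.proj (R := ZMod 2) (φ := fun _ : Fin l => ZMod 2) j) := by
      rw [Submodule.span_le]
      rintro v ⟨a, _, rfl⟩
      have : Q a j = 0 := by
        simp [hQdef, hj, haddself]
      simpa [LinearMap.mem_ker] using this
    have hx0 := hker hmem
    rw [LinearMap.mem_ker] at hx0
    simp only [LinearMap.proj_apply, hj] at hx0
    exact one_ne_zero hx0
  -- the augmented rank function
  set f : Finset (Fin n) → ℕ :=
    fun A => TutteAux.sr (insert x ((fun a => P a) '' ↑A)) with hfdef
  have hrhoQ : ∀ A : Finset (Fin n), rho Q A + 1 = f A := by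
    intro A
    rw [TutteAux.rho_eq_sr Q A, ← TutteAux.sr_insert_of_not_mem hx (hxnotQ A)]
    exact TutteAux.sr_congr (hspanQP A)
  have hr : rho P Finset.univ = f Finset.univ := by
    rw [TutteAux.rho_eq_sr]
    refine TutteAux.sr_congr ?_
    simp only [Finset.coe_univ, Set.image_univ]
    rw [Submodule.span_insert_eq_span hxspan]
  have hrhoR : ∀ (A : Finset (Fin n)) (B : Finset (Fin t)),
      rho R (A.disjSum B) = if B.Nonempty then f A else rho P A := by
    intro A B
    have himg : (fun i => R i) '' ↑(A.disjSum B)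
        = ((fun a => P a) '' ↑A) ∪ ((fun _ : Fin t => x) '' ↑B) := by
      ext v
      constructor
      · rintro ⟨i, hi, rfl⟩
        cases i with
        | inl a => exact Or.inl ⟨a, by simpa using hi, rfl⟩
        | inr b => exact Or.inr ⟨b, by simpa using hi, rfl⟩
      · rintro (⟨a, ha, rfl⟩ | ⟨b, hb, rfl⟩)
        · exact ⟨Sum.inl a, by simpa using ha, rfl⟩
        · exact ⟨Sum.inr b, by simpa using hb, rfl⟩
    rw [TutteAux.rho_eq_sr R, himg]
    by_cases hB : B.Nonempty
    · rw [if_pos hB, Set.Nonempty.image_const (Finset.coe_nonempty.mpr hB), Set.union_singleton]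
    · rw [if_neg hB, Finset.not_nonempty_iff_eq_empty.mp hB]
      simp [TutteAux.rho_eq_sr P A]
  haveI : Nonempty (Fin t) := Fin.pos_iff_nonempty.mp ht
  have hTne : (Finset.univ : Finset (Fin t)).Nonempty := Finset.univ_nonempty
  have hRuniv : rho R Finset.univ = rho P Finset.univ := by
    rw [← Finset.univ_disjSum_univ, hrhoR, if_pos hTne, hr]
  have hQuniv : rho Q Finset.univ + 1 = rho P Finset.univ := by
    rw [hrhoQ, hr]
  -- bounds
  have hfub : ∀ A : Finset (Fin n), f A ≤ rho P Finset.univ := by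
    intro A
    rw [hr]
    exact TutteAux.sr_mono (Set.insert_subset_insert
      (Set.image_mono (by simp [Finset.coe_subset])))
  have hflb : ∀ A : Finset (Fin n), 1 ≤ f A := by
    intro A
    have h1 : TutteAux.sr {x} = 1 := by
      unfold TutteAux.sr
      exact finrank_span_singleton hx
    rw [← h1]
    exact TutteAux.sr_mono (Set.singleton_subset_iff.mpr (Set.mem_insert _ _))
  have hfcard : ∀ A : Finset (Fin n), f A ≤ A.card + 1 := by
    intro A
    have h1 : f A ≤ TutteAux.sr ((fun a => P a) '' ↑A) + 1 :=
      TutteAux.sr_insert_le x _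
    have h2 : TutteAux.sr ((fun a => P a) '' ↑A) = rho P A := (TutteAux.rho_eq_sr P A).symm
    have h3 : rho P A ≤ A.card := by
      have := Matrix.rank_le_card_height (P.submatrix (fun i : {i // i ∈ A} => (i : Fin n)) id)
      simpa [rho, Fintype.card_coe] using this
    omega
  -- the sum over subsets of the disjoint union
  let e : Finset (Fin n) × Finset (Fin t) ≃ Finset (Fin n ⊕ Fin t) :=
    { toFun := fun p => p.1.disjSum p.2
      invFun := fun u => (u.toLeft, u.toRight)
      left_inv := fun p => by simp
      right_inv := fun u => Finset.toLeft_disjSum_toRight }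
  set c : ℂ := ∑ B ∈ (Finset.univ : Finset (Finset (Fin t))).erase ∅, (yh - 1) ^ (B.card - 1)
    with hcdef
  have hc : (1 - yh) * c = 1 - yh ^ t := by
    have h1 : (yh - 1) * c = ∑ B ∈ (Finset.univ : Finset (Finset (Fin t))).erase ∅,
        (yh - 1) ^ B.card := by
      rw [hcdef, Finset.mul_sum]
      refine Finset.sum_congr rfl fun B hB => ?_
      have hBne : B ≠ ∅ := (Finset.mem_erase.mp hB).1
      have hB1 : 1 ≤ B.card := Finset.card_pos.mpr (Finset.nonempty_iff_ne_empty.mpr hBne)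
      rw [← pow_succ']
      congr 1
      omega
    have h3 : ∑ B : Finset (Fin t), (yh - 1) ^ B.card = yh ^ t := by
      have h := TutteAux.sum_pow_card (Finset.univ : Finset (Fin t)) (yh - 1)
      rw [Finset.powerset_univ] at h
      simpa using h
    have h2 : (1 : ℂ) + ∑ B ∈ (Finset.univ : Finset (Finset (Fin t))).erase ∅,
        (yh - 1) ^ B.card = yh ^ t := by
      rw [← h3, ← Finset.add_sum_erase _ _ (Finset.mem_univ (∅ : Finset (Fin t)))]
      simp
    linear_combination -h1 - h2
  -- rewrite tutte R
  have htutteR : tutte R xh yh = ∑ A : Finset (Fin n), ∑ B : Finset (Fin t),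
      (xh - 1) ^ (rho P Finset.univ - rho R (A.disjSum B)) *
        (yh - 1) ^ (A.card + B.card - rho R (A.disjSum B)) := by
    have hbij : ∀ g : Finset (Fin n ⊕ Fin t) → ℂ,
        ∑ X : Finset (Fin n ⊕ Fin t), g X
          = ∑ A : Finset (Fin n), ∑ B : Finset (Fin t), g (A.disjSum B) := fun g =>
      ((Fintype.sum_equiv e (fun p => g (e p)) g fun p => rfl).symm).trans
        (Fintype.sum_prod_type _)
    unfold tutte
    rw [Finset.powerset_univ, hRuniv, hbij]
    refine Finset.sum_congr rfl fun A _ => Finset.sum_congr rfl fun B _ => ?_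
    rw [Finset.card_disjSum]
  have hinner : ∀ A : Finset (Fin n),
      ∑ B : Finset (Fin t),
        (xh - 1) ^ (rho P Finset.univ - rho R (A.disjSum B)) *
          (yh - 1) ^ (A.card + B.card - rho R (A.disjSum B))
      = (xh - 1) ^ (rho P Finset.univ - rho P A) * (yh - 1) ^ (A.card - rho P A)
        + c * ((xh - 1) ^ (rho P Finset.univ - f A) * (yh - 1) ^ (A.card + 1 - f A)) := by
    intro A
    rw [← Finset.add_sum_erase _ _ (Finset.mem_univ (∅ : Finset (Fin t)))]
    congr 1
    · rw [hrhoR A ∅, if_neg (by simp)]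
      simp
    · rw [hcdef, Finset.sum_mul]
      refine Finset.sum_congr rfl fun B hB => ?_
      have hBne : B.Nonempty :=
        Finset.nonempty_iff_ne_empty.mpr (Finset.mem_erase.mp hB).1
      have hB1 : 1 ≤ B.card := Finset.card_pos.mpr hBne
      rw [hrhoR A B, if_pos hBne]
      have hexp : A.card + B.card - f A = (B.card - 1) + (A.card + 1 - f A) := by
        have := hfcard A
        omega
      rw [hexp, pow_add]
      ring
  have htutteQ : tutte Q xh yh = ∑ A : Finset (Fin n),
      (xh - 1) ^ (rho P Finset.univ - f A) * (yh - 1) ^ (A.card + 1 - f A) := by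
    unfold tutte
    rw [Finset.powerset_univ]
    refine Finset.sum_congr rfl fun A _ => ?_
    have h1 := hrhoQ A
    rw [show rho Q Finset.univ - rho Q A = rho P Finset.univ - f A from by omega,
      show A.card - rho Q A = A.card + 1 - f A from by omega]
  have htutteP : tutte P xh yh = ∑ A : Finset (Fin n),
      (xh - 1) ^ (rho P Finset.univ - rho P A) * (yh - 1) ^ (A.card - rho P A) := by
    unfold tutte
    rw [Finset.powerset_univ]
  rw [htutteR, Finset.sum_congr rfl fun A _ => hinner A, Finset.sum_add_distrib,
    ← Finset.mul_sum, ← htutteP, ← htutteQ]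
  linear_combination tutte Q xh yh * hc
end
end
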